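/- Suppose ω ∈ ℝ^n and k ∈ ℝ_{>0}^n satisfy IC1, IC2, and IC3, and let σ ∈ {−1,+1}^n. If the partial sums s_ℓ = Σ_{μ=1}^ℓ σ_μ k_μ satisfy s_ℓ ≤ 0 for every ℓ = 1, 2, …, n, then f_σ has no positive roots. -/

import Mathlib

/-- The function `f_σ(R) = -R + (1/n) ∑ μ, σ μ √(k μ² R - ω μ²)`. -/
noncomputable def fSigma (n : ℕ) (ω k σ : Fin n → ℝ) (R : ℝ) : ℝ :=
  -R + (1 / (n : ℝ)) * ∑ μ, σ μ * Real.sqrt ((k μ) ^ 2 * R - (ω μ) ^ 2)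

/-- `R` is a positive root of `f_σ`. -/
def IsPosRoot (n : ℕ) (ω k σ : Fin n → ℝ) (R : ℝ) : Prop :=
  0 < R ∧ (∀ μ, (ω μ) ^ 2 ≤ (k μ) ^ 2 * R) ∧ fSigma n ω k σ R = 0

/-- Prop. 2.2: under IC1–IC3, if all the partial sums
`s_ℓ = ∑_{μ=1}^ℓ σ μ k μ` are nonpositive then `f_σ` has no positive roots. -/
theorem no_posRoot_of_partial_sums_nonpos (n : ℕ) (hn : 2 ≤ n) (ω k σ : Fin n → ℝ)
    (hIC1 : ∑ μ, ω μ = 0) (hIC2 : ω ≠ 0)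
    (hIC3pos : ∀ μ, 0 < k μ)
    (hIC3ord : ∀ μ ν : Fin n, μ ≤ ν → |ω μ / k μ| ≤ |ω ν / k ν|)
    (hσ : ∀ μ, σ μ = -1 ∨ σ μ = 1)
    (hpart : ∀ ℓ : Fin n, ∑ μ ∈ Finset.univ.filter (fun μ => μ ≤ ℓ), σ μ * k μ ≤ 0) :
    ¬ ∃ R : ℝ, IsPosRoot n ω k σ R := by
  rintro ⟨R, hR, hdom, hroot⟩
  classical
  set a : ℕ → ℝ := fun i => if h : i < n then σ ⟨i, h⟩ * k ⟨i, h⟩ else 0 with ha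
  set t : ℕ → ℝ := fun i => if h : i < n then
      Real.sqrt (R - (ω ⟨i, h⟩ / k ⟨i, h⟩) ^ 2) else 0 with htdef
  -- partial sums of a are ≤ 0
  have hS : ∀ m, m ≤ n → ∑ i ∈ Finset.range m, a i ≤ 0 := by
    intro m hm
    rcases Nat.eq_zero_or_pos m with h0 | h1
    · simp [h0]
    · have hℓ : m - 1 < n := by omega
      have := hpart ⟨m - 1, hℓ⟩
      have heq : ∑ i ∈ Finset.range m, a i
          = ∑ μ ∈ Finset.univ.filter (fun μ => μ ≤ (⟨m - 1, hℓ⟩ : Fin n)), σ μ * k μ := by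
        refine Finset.sum_nbij' (fun i => if h : i < n then (⟨i, h⟩ : Fin n) else ⟨0, by omega⟩)
          (fun μ => (μ : ℕ)) ?_ ?_ ?_ ?_ ?_
        · intro i hi
          simp only [Finset.mem_range] at hi
          have hin : i < n := by omega
          simp [hin, Fin.le_def]
          omega
        · intro μ hμ
          simp only [Finset.mem_filter, Fin.le_def] at hμ
          simp only [Finset.mem_range]
          omega
        · intro i hi
          simp only [Finset.mem_range] at hi
          have hin : i < n := by omega
          simp [hin]
        · intro μ hμ
          simp [μ.isLt]
        · intro i hi
          simp only [Finset.mem_range] at hi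
          have hin : i < n := by omega
          simp [ha, hin]
      rw [heq]; exact this
  -- t is nonnegative
  have ht0 : ∀ i, 0 ≤ t i := by
    intro i
    by_cases h : i < n
    · simp [htdef, h, Real.sqrt_nonneg]
    · simp [htdef, h]
  -- t nonincreasing within range
  have htmono : ∀ i, i + 1 < n → t (i + 1) ≤ t i := by
    intro i h
    have h' : i < n := by omega
    have hh := hIC3ord ⟨i, h'⟩ ⟨i + 1, h⟩ (by simp [Fin.le_def])
    have hsq : (ω ⟨i, h'⟩ / k ⟨i, h'⟩) ^ 2 ≤ (ω ⟨i + 1, h⟩ / k ⟨i + 1, h⟩) ^ 2 := by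
      have := sq_abs (ω ⟨i, h'⟩ / k ⟨i, h'⟩)
      nlinarith [abs_nonneg (ω ⟨i, h'⟩ / k ⟨i, h'⟩), sq_abs (ω ⟨i + 1, h⟩ / k ⟨i + 1, h⟩)]
    simp only [htdef, h, h', dif_pos]
    exact Real.sqrt_le_sqrt (by linarith)
  -- the main sum equals ∑ a i * t i over range n
  have hsum : ∑ μ, σ μ * Real.sqrt ((k μ) ^ 2 * R - (ω μ) ^ 2)
      = ∑ i ∈ Finset.range n, t i • a i := by
    rw [← Fin.sum_univ_eq_sum_range (fun i => t i • a i) n]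
    refine Finset.sum_congr rfl ?_
    intro μ _
    have h : (μ : ℕ) < n := μ.isLt
    simp only [ha, htdef, h, dif_pos, smul_eq_mul, Fin.eta]
    have hk := hIC3pos μ
    have hfac : (k μ) ^ 2 * R - (ω μ) ^ 2
        = (k μ) ^ 2 * (R - (ω μ / k μ) ^ 2) := by
      field_simp
    rw [hfac, Real.sqrt_mul (sq_nonneg _), Real.sqrt_sq hk.le]
    ring
  -- Abel summation bound
  have habel : ∑ i ∈ Finset.range n, t i • a i ≤ 0 := by
    rw [Finset.sum_range_by_parts]
    have h1 : t (n - 1) • ∑ i ∈ Finset.range n, a i ≤ 0 := by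
      have := hS n le_rfl
      exact smul_nonpos_of_nonneg_of_nonpos (ht0 _) this
    have h2 : 0 ≤ ∑ i ∈ Finset.range (n - 1), (t (i + 1) - t i) • ∑ j ∈ Finset.range (i + 1), a j := by
      refine Finset.sum_nonneg ?_
      intro i hi
      have hi' : i + 1 < n := by
        have := Finset.mem_range.mp hi; omega
      have := htmono i hi'
      have := hS (i + 1) (by omega)
      simp only [smul_eq_mul]
      nlinarith
    linarith
  -- conclude
  have hroot' : -R + (1 / (n : ℝ)) * ∑ μ, σ μ * Real.sqrt ((k μ) ^ 2 * R - (ω μ) ^ 2) = 0 := hroot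
  rw [hsum] at hroot'
  have hnpos : (0 : ℝ) < 1 / (n : ℝ) := by positivity
  nlinarith [habel]
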